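/- The map x** ↦ (W x**)^ is a bounded linear projection (retraction) from (ℓ¹)** onto the canonical image of ℓ¹ in (ℓ¹)**, of norm 1. -/

import Mathlib

noncomputable section
open scoped ENNReal
open Filter

abbrev ell1 := lp (fun _ : ℕ => ℝ) 1
abbrev ellInfty := lp (fun _ : ℕ => ℝ) ∞

/-- The Gossez operator, coordinatewise: (Gx)_m = Σ_{n>m} x_n − Σ_{n<m} x_n. -/
def Gfun (x : ℕ → ℝ) (m : ℕ) : ℝ :=
  (∑' n, if m < n then x n else 0) - ∑ n ∈ Finset.range m, x n

/-- The all-ones sequence e* ∈ ℓ∞. -/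
def eStar : ellInfty :=
  ⟨fun _ => (1 : ℝ), memℓp_infty ⟨1, by rintro r ⟨i, rfl⟩; simp⟩⟩

/-- The m-th standard unit vector e*_m ∈ ℓ∞. -/
def eVec (m : ℕ) : ellInfty := lp.single ∞ m (1 : ℝ)

namespace RetractionAux

abbrev D := StrongDual ℝ ellInfty

instance : Nontrivial ellInfty :=
  ⟨eStar, 0, by
    intro h
    have h0 : (eStar : ℕ → ℝ) 0 = ((0 : ellInfty) : ℕ → ℝ) 0 := by rw [h]
    simp [eStar, lp.coeFn_zero] at h0⟩

lemma eVec_apply (m k : ℕ) : (eVec m : ℕ → ℝ) k = if k = m then 1 else 0 := by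
  by_cases h : k = m
  · subst h; simp [eVec, lp.single_apply_self]
  · simp [eVec, lp.single_apply_ne _ _ _ h, h]

/-- Partial sums of |xss (eVec m)| are bounded by ‖xss‖. -/
lemma sum_abs_le (xss : D) (s : Finset ℕ) :
    ∑ m ∈ s, |xss (eVec m)| ≤ ‖xss‖ := by
  set c : ℕ → ℝ := fun m => if 0 ≤ xss (eVec m) then 1 else -1 with hc
  set y : ellInfty := ∑ m ∈ s, c m • eVec m with hy
  have hyk : ∀ k, (y : ℕ → ℝ) k = if k ∈ s then c k else 0 := by
    intro k
    have : (y : ℕ → ℝ) k = ∑ m ∈ s, c m * (eVec m : ℕ → ℝ) k := by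
      rw [hy, lp.coeFn_sum]
      simp
    rw [this]
    by_cases hk : k ∈ s
    · rw [Finset.sum_eq_single k]
      · simp [eVec_apply, hk]
      · intro b _ hb; simp [eVec_apply, hb.symm]
      · intro h; exact absurd hk h
    · rw [Finset.sum_eq_zero, if_neg hk]
      intro b hb
      have : k ≠ b := by rintro rfl; exact hk hb
      simp [eVec_apply, this]
  have hynorm : ‖y‖ ≤ 1 := by
    rw [lp.norm_eq_ciSup]
    apply ciSup_le
    intro k
    rw [hyk k]
    by_cases hk : k ∈ s
    · by_cases h0 : 0 ≤ xss (eVec k) <;> simp [hc, hk, h0]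
    · simp [hk]
  have key : ∑ m ∈ s, |xss (eVec m)| = xss y := by
    rw [hy, map_sum]
    apply Finset.sum_congr rfl
    intro m _
    rw [map_smul]
    by_cases h0 : 0 ≤ xss (eVec m)
    · simp [hc, h0, abs_of_nonneg h0]
    · simp [hc, h0, abs_of_neg (lt_of_not_ge h0)]
  rw [key]
  calc xss y ≤ |xss y| := le_abs_self _
    _ ≤ ‖xss‖ * ‖y‖ := xss.le_opNorm y
    _ ≤ ‖xss‖ * 1 := by
        exact mul_le_mul_of_nonneg_left hynorm (norm_nonneg _)
    _ = ‖xss‖ := mul_one _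

lemma summable_w (xss : D) : Summable fun m => |xss (eVec m)| :=
  summable_of_sum_le (fun _ => abs_nonneg _) (sum_abs_le xss)

lemma tsum_w_le (xss : D) : ∑' m, |xss (eVec m)| ≤ ‖xss‖ :=
  Summable.tsum_le_of_sum_le (summable_w xss) (sum_abs_le xss)

lemma summable_mul (xss : D) (xs : ellInfty) :
    Summable fun m => xss (eVec m) * xs m := by
  apply Summable.of_abs
  refine Summable.of_nonneg_of_le (fun m => abs_nonneg _) (fun m => ?_)
    ((summable_w xss).mul_right ‖xs‖)
  rw [abs_mul]
  exact mul_le_mul_of_nonneg_left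
    (by simpa using lp.norm_apply_le_norm ENNReal.top_ne_zero xs m) (abs_nonneg _)

/-- The functional xs ↦ ∑' m, xss (eVec m) * xs m, as a linear map. -/
def Wl (xss : D) : ellInfty →ₗ[ℝ] ℝ where
  toFun xs := ∑' m, xss (eVec m) * xs m
  map_add' a b := by
    rw [← Summable.tsum_add (summable_mul xss a) (summable_mul xss b)]
    apply tsum_congr
    intro m
    have : ((a + b : ellInfty) : ℕ → ℝ) m = a m + b m := by rw [lp.coeFn_add]; rfl
    rw [this, mul_add]
  map_smul' r a := by
    simp only [RingHom.id_apply, smul_eq_mul]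
    rw [← tsum_mul_left]
    apply tsum_congr
    intro m
    have : ((r • a : ellInfty) : ℕ → ℝ) m = r * a m := by rw [lp.coeFn_smul]; rfl
    rw [this]; ring

lemma Wl_bound (xss : D) (xs : ellInfty) : ‖Wl xss xs‖ ≤ ‖xss‖ * ‖xs‖ := by
  have h1 : ‖Wl xss xs‖ ≤ ∑' m, ‖xss (eVec m) * xs m‖ :=
    norm_tsum_le_tsum_norm (by simpa [Real.norm_eq_abs, abs_mul] using
      ((summable_mul xss xs).abs))
  refine h1.trans ?_
  have h2 : ∀ m, ‖xss (eVec m) * xs m‖ ≤ |xss (eVec m)| * ‖xs‖ := by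
    intro m
    rw [Real.norm_eq_abs, abs_mul]
    exact mul_le_mul_of_nonneg_left
      (by simpa using lp.norm_apply_le_norm ENNReal.top_ne_zero xs m) (abs_nonneg _)
  calc ∑' m, ‖xss (eVec m) * xs m‖ ≤ ∑' m, |xss (eVec m)| * ‖xs‖ :=
        Summable.tsum_le_tsum h2
          (by simpa [Real.norm_eq_abs, abs_mul] using (summable_mul xss xs).abs)
          ((summable_w xss).mul_right _)
    _ = (∑' m, |xss (eVec m)|) * ‖xs‖ := tsum_mul_right
    _ ≤ ‖xss‖ * ‖xs‖ := mul_le_mul_of_nonneg_right (tsum_w_le xss) (norm_nonneg _)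

/-- The functional as a continuous linear map. -/
def Wc (xss : D) : D :=
  LinearMap.mkContinuous (Wl xss) ‖xss‖ (Wl_bound xss)

lemma Wc_apply (xss : D) (xs : ellInfty) : Wc xss xs = ∑' m, xss (eVec m) * xs m := rfl

lemma Wc_norm_le (xss : D) : ‖Wc xss‖ ≤ ‖xss‖ :=
  LinearMap.mkContinuous_norm_le _ (norm_nonneg xss) _

/-- The projection as a linear map. -/
def Pl : D →ₗ[ℝ] D where
  toFun := Wc
  map_add' a b := by
    apply ContinuousLinearMap.ext
    intro xs
    simp only [Wc_apply, ContinuousLinearMap.add_apply]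
    rw [← Summable.tsum_add (summable_mul a xs) (summable_mul b xs)]
    apply tsum_congr; intro m
    simp [add_mul]
  map_smul' r a := by
    apply ContinuousLinearMap.ext
    intro xs
    simp only [Wc_apply, RingHom.id_apply, ContinuousLinearMap.smul_apply, smul_eq_mul]
    rw [← tsum_mul_left]
    apply tsum_congr; intro m
    ring

/-- The projection. -/
def Pc : D →L[ℝ] D :=
  LinearMap.mkContinuous Pl 1 (fun xss => by rw [one_mul]; exact Wc_norm_le xss)

lemma Pc_apply (xss : D) (xs : ellInfty) : Pc xss xs = ∑' m, xss (eVec m) * xs m := rfl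

lemma Pc_eVec (xss : D) (k : ℕ) : Pc xss (eVec k) = xss (eVec k) := by
  rw [Pc_apply]
  rw [tsum_eq_single k]
  · simp [eVec_apply]
  · intro m hm
    simp [eVec_apply, hm]

/-- Evaluation at coordinate 0. -/
def ev0 : D :=
  LinearMap.mkContinuous
    { toFun := fun xs : ellInfty => xs 0
      map_add' := fun a b => rfl
      map_smul' := fun r a => rfl } 1
    (fun xs => by
      rw [one_mul]; exact (lp.norm_apply_le_norm ENNReal.top_ne_zero xs 0 : ‖xs 0‖ ≤ ‖xs‖))

lemma ev0_apply (xs : ellInfty) : ev0 xs = xs 0 := rfl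

lemma eStar_norm_le : ‖eStar‖ ≤ 1 := by
  rw [lp.norm_eq_ciSup]
  apply ciSup_le
  intro k
  simp [eStar]

lemma ev0_norm : ‖ev0‖ = 1 := by
  apply le_antisymm
  · exact LinearMap.mkContinuous_norm_le _ zero_le_one _
  · have h1 : (1 : ℝ) = ev0 eStar := by rw [ev0_apply]; rfl
    calc (1:ℝ) = ev0 eStar := h1
      _ ≤ |ev0 eStar| := le_abs_self _
      _ ≤ ‖ev0‖ * ‖eStar‖ := ev0.le_opNorm eStar
      _ ≤ ‖ev0‖ * 1 := mul_le_mul_of_nonneg_left eStar_norm_le (norm_nonneg _)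
      _ = ‖ev0‖ := mul_one _

lemma Pc_ev0 : Pc ev0 = ev0 := by
  apply ContinuousLinearMap.ext
  intro xs
  rw [Pc_apply, ev0_apply]
  rw [tsum_eq_single 0]
  · simp [ev0_apply, eVec_apply]
  · intro m hm
    rw [ev0_apply]
    simp [eVec_apply, Ne.symm hm]

end RetractionAux

open RetractionAux

theorem retraction_onto_ell1 :
    ∃ P : StrongDual ℝ ellInfty →L[ℝ] StrongDual ℝ ellInfty,
      (∀ (xss : StrongDual ℝ ellInfty) (xs : ellInfty),
        P xss xs = ∑' m, xss (eVec m) * xs m) ∧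
      ‖P‖ = 1 ∧
      (∀ xss, P (P xss) = P xss) ∧
      Set.range P = {xhat : StrongDual ℝ ellInfty |
        ∃ x : ell1, ∀ xs : ellInfty, xhat xs = ∑' m, x m * xs m} := by
  refine ⟨Pc, fun xss xs => Pc_apply xss xs, ?_, ?_, ?_⟩
  · apply le_antisymm
    · exact LinearMap.mkContinuous_norm_le _ zero_le_one _
    · have h : ‖Pc ev0‖ ≤ ‖Pc‖ * ‖ev0‖ := Pc.le_opNorm ev0
      rw [Pc_ev0, ev0_norm, mul_one] at h
      exact h
  · intro xss
    apply ContinuousLinearMap.ext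
    intro xs
    rw [Pc_apply, Pc_apply]
    apply tsum_congr
    intro m
    rw [Pc_eVec]
  · ext xhat
    constructor
    · rintro ⟨xss, rfl⟩
      refine ⟨⟨fun m => xss (eVec m), ?_⟩, ?_⟩
      · apply memℓp_gen
        simpa [Real.norm_eq_abs] using summable_w xss
      · intro xs
        exact Pc_apply xss xs
    · rintro ⟨x, hx⟩
      refine ⟨xhat, ?_⟩
      have heval : ∀ k, xhat (eVec k) = x k := by
        intro k
        rw [hx (eVec k), tsum_eq_single k]
        · simp [eVec_apply]
        · intro m hm
          simp [eVec_apply, hm]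
      apply ContinuousLinearMap.ext
      intro xs
      rw [Pc_apply, hx xs]
      apply tsum_congr
      intro m
      rw [heval]
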